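/- Let Ĝ be a group with a surjective homomorphism π: Ĝ → {±1} and kernel G, let λ̂ be a normalized π-twisted 2-cocycle on Ĝ valued in ℂˣ, and let λ be its restriction to G. Let (V, φ) be a λ-twisted representation of G and let ς ∈ Ĝ∖G be odd. Define Θ := λ̂(ς,ς) · ev_V ∘ φ(ς²): V → (V^∨)^∨, where ev_V: V → (V^∨)^∨ is the canonical evaluation map (note ς² ∈ G). Then Θ is a morphism of λ-twisted representations from (V, φ) to ((V^∨)^∨, (φ^ς)^ς); that is, Θ ∘ φ(g) = (φ^ς)^ς(g) ∘ Θ for all g ∈ G, where (φ^ς)^ς is the twisted representation on (V^∨)^∨ obtained by applying the dualization construction twice. (This is the statement that Θ^ς defines the natural transformation 1 ⇒ P^ς ∘ (P^ς)^op of the duality structure in Section 4.5 of the paper.) -/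

import Mathlib

/-- Conjugation `g ↦ ς g ς⁻¹` preserves the kernel of `π`. -/
def kconj {Ghat : Type*} [Group Ghat] (π : Ghat →* ℤˣ) (ς : Ghat) (g : π.ker) :
    π.ker :=
  ⟨ς * (g : Ghat) * ς⁻¹, by
    have hg : π (g : Ghat) = 1 := MonoidHom.mem_ker.mp g.2
    rw [MonoidHom.mem_ker, map_mul, map_mul, map_inv, hg, mul_one, mul_inv_cancel]⟩

/-- The square `ς²` of any element of `Ĝ` lies in the kernel of `π : Ĝ → {±1}`. -/
def sqk {Ghat : Type*} [Group Ghat] (π : Ghat →* ℤˣ) (ς : Ghat) : π.ker :=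
  ⟨ς * ς, by rw [MonoidHom.mem_ker, map_mul]; exact Int.units_mul_self (π ς)⟩

/-- The reflection-twisted transgression `τ^ref_π(λ̂)([ς]g)` of the paper:
`τ_ς(g) = λ̂(g⁻¹,g)⁻¹ · λ̂(ςg⁻¹ς⁻¹, ς) · λ̂(ς, g⁻¹)⁻¹`. -/
def tau {Ghat : Type*} [Group Ghat] (lam : Ghat → Ghat → ℂˣ) (ς g : Ghat) : ℂˣ :=
  (lam g⁻¹ g)⁻¹ * lam (ς * g⁻¹ * ς⁻¹) ς * (lam ς g⁻¹)⁻¹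

/-- The dualization construction of Section 4.5 of the paper:
`φ^ς(g) := τ_ς(g)⁻¹ · (φ(ς g⁻¹ ς⁻¹))^∨` on the dual space. -/
noncomputable def dualTw {Ghat : Type*} [Group Ghat] (π : Ghat →* ℤˣ)
    (lam : Ghat → Ghat → ℂˣ) (ς : Ghat) {V : Type*} [AddCommGroup V] [Module ℂ V]
    (φ : π.ker → (V →ₗ[ℂ] V)) (g : π.ker) :
    Module.Dual ℂ V →ₗ[ℂ] Module.Dual ℂ V :=
  (((tau lam ς (g : Ghat))⁻¹ : ℂˣ) : ℂ) • LinearMap.dualMap (φ (kconj π ς g⁻¹))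

/-- the scalar identity at the heart of the double-dual morphism claim -/
theorem scalar_id {Ghat : Type*} [Group Ghat] (π : Ghat →* ℤˣ)
    (lam : Ghat → Ghat → ℂˣ) (hnorm : lam 1 1 = 1)
    (hcoc : ∀ ω₁ ω₂ ω₃ : Ghat,
      lam ω₂ ω₃ ^ ((π ω₁ : ℤˣ) : ℤ) * lam ω₁ (ω₂ * ω₃) = lam (ω₁ * ω₂) ω₃ * lam ω₁ ω₂)
    (s t : Ghat) (hs : π s = -1) (ht : π t = 1) :
    lam (s * s) t * tau lam s t * tau lam s (s * t⁻¹ * s⁻¹)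
      = lam (s * s * t * s⁻¹ * s⁻¹) (s * s) := by
  -- lam with identity arguments is 1
  have lemR : ∀ x : Ghat, lam x 1 = 1 := by
    intro x
    have h := hcoc x 1 1
    rw [hnorm, one_zpow, one_mul, mul_one, mul_one] at h
    exact (left_eq_mul.mp h)
  have lemL : ∀ x : Ghat, lam 1 x = 1 := by
    intro x
    have h := hcoc 1 1 x
    rw [hnorm, map_one, one_mul, one_mul] at h
    simp only [Units.val_one, zpow_one] at h
    exact mul_left_cancel h
  -- parity computations
  have hπw : π (s*(s*(t*(s⁻¹*s⁻¹)))) = 1 := by simp [map_mul, map_inv, hs, ht]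
  have hπu : π (s*(t*s⁻¹)) = 1 := by simp [map_mul, map_inv, hs, ht]
  have hπti : π t⁻¹ = 1 := by simp [map_inv, ht]
  -- the seven cocycle instances
  have hA := hcoc (s*(s*(t*(s⁻¹*s⁻¹)))) s s
  have hB := hcoc s (s*(t*s⁻¹)) s
  have hC := hcoc s s t
  have hD := hcoc (s*(t*s⁻¹)) (s*(t⁻¹*s⁻¹)) s
  have hE := hcoc (s*(t*s⁻¹)) s t⁻¹
  have hF := hcoc s t t⁻¹
  have hH := hcoc t⁻¹ t t⁻¹
  rw [hπw] at hA
  rw [hs] at hB hC hF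
  rw [hπu] at hD hE
  rw [hπti] at hH
  simp only [Units.val_one, zpow_one, Units.val_neg, zpow_neg, mul_assoc, mul_inv_rev,
    inv_inv, one_mul, mul_one, inv_mul_cancel_left, mul_inv_cancel_left, inv_mul_cancel,
    mul_inv_cancel, lemL, lemR] at hA hB hC hD hE hF hH
  unfold tau
  simp only [mul_assoc, mul_inv_rev, inv_inv, one_mul, mul_one, inv_mul_cancel_left,
    mul_inv_cancel_left, inv_mul_cancel, mul_inv_cancel]
  rw [Units.ext_iff] at hA hB hC hD hE hF hH
  rw [Units.ext_iff]
  push_cast at hA hB hC hD hE hF hH ⊢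
  set a1 : ℂ := ↑(lam s s) with ha1
  set a2 : ℂ := ↑(lam (s*(s*(t*(s⁻¹*s⁻¹)))) (s*s)) with ha2
  set a3 : ℂ := ↑(lam (s*(s*(t*s⁻¹))) s) with ha3
  set a4 : ℂ := ↑(lam (s*(s*(t*(s⁻¹*s⁻¹)))) s) with ha4
  set a5 : ℂ := ↑(lam s (s*t)) with ha5
  set a6 : ℂ := ↑(lam s (s*(t*s⁻¹))) with ha6
  set a7 : ℂ := ↑(lam (s*(t*s⁻¹)) s) with ha7
  set a8 : ℂ := ↑(lam s t) with ha8
  set a9 : ℂ := ↑(lam (s*s) t) with ha9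
  set a10 : ℂ := ↑(lam (s*(t⁻¹*s⁻¹)) s) with ha10
  set a11 : ℂ := ↑(lam (s*(t*s⁻¹)) (s*(t⁻¹*s⁻¹))) with ha11
  set a12 : ℂ := ↑(lam (s*(t*s⁻¹)) (s*t⁻¹)) with ha12
  set a13 : ℂ := ↑(lam s t⁻¹) with ha13
  set a14 : ℂ := ↑(lam (s*t) t⁻¹) with ha14
  set a15 : ℂ := ↑(lam t t⁻¹) with ha15
  set a16 : ℂ := ↑(lam t⁻¹ t) with ha16
  have n1 : a1 ≠ 0 := Units.ne_zero _
  have n4 : a4 ≠ 0 := Units.ne_zero _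
  have n5 : a5 ≠ 0 := Units.ne_zero _
  have n6 : a6 ≠ 0 := Units.ne_zero _
  have n7 : a7 ≠ 0 := Units.ne_zero _
  have n8 : a8 ≠ 0 := Units.ne_zero _
  have n11 : a11 ≠ 0 := Units.ne_zero _
  have n13 : a13 ≠ 0 := Units.ne_zero _
  have n15 : a15 ≠ 0 := Units.ne_zero _
  have n16 : a16 ≠ 0 := Units.ne_zero _
  have n3 : a3 ≠ 0 := Units.ne_zero _
  have n9 : a9 ≠ 0 := Units.ne_zero _
  have n10 : a10 ≠ 0 := Units.ne_zero _
  have n12 : a12 ≠ 0 := Units.ne_zero _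
  have n14 : a14 ≠ 0 := Units.ne_zero _
  clear_value a1 a2 a3 a4 a5 a6 a7 a8 a9 a10 a11 a12 a13 a14 a15 a16
  clear ha1 ha2 ha3 ha4 ha5 ha6 ha7 ha8 ha9 ha10 ha11 ha12 ha13 ha14 ha15 ha16 hcoc hnorm lemL lemR
  field_simp at hA hB hC hD hE hF ⊢
  have e1 : a9 * a1 * a8 = a3 * a6 * a7 := by linear_combination hB - hC
  have e2 : a12 * a13 * a8 * a15 = a7 := by linear_combination a8*a15*hE - a7*hF
  have e3 : a10 * a7 = a11 * a13 * a8 * a15 := by linear_combination a13*a8*a15*hD - a10*e2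
  have T' : a9 * (a10 * a4) * (a1*a8*a7) = a2 * (a16 * (a13 * (a11 * a6))) * (a1*a8*a7) := by
    linear_combination (a10*a7*a4)*e1 + (a3*a6*a7*a4)*e3 - (a6*a7*a11*a13*a8*a15)*hA
      + (a1*a2*a6*a7*a11*a13*a8)*hH
  exact mul_right_cancel₀ (mul_ne_zero (mul_ne_zero n1 n8) n7) (by linear_combination T')

/-- The claim of Section 4.5 of the paper that `Θ^ς := λ̂(ς,ς)·ev_V ∘ φ(ς²)` is a morphism
of `λ`-twisted representations `(V, φ) → ((V^∨)^∨, (φ^ς)^ς)`, i.e. the component of the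
natural transformation `1 ⇒ P^ς ∘ (P^ς)^op` of the duality structure. -/
theorem double_dual_morphism
    {Ghat : Type*} [Group Ghat] (π : Ghat →* ℤˣ) (hπ : Function.Surjective π)
    (lam : Ghat → Ghat → ℂˣ) (hnorm : lam 1 1 = 1)
    (hcoc : ∀ ω₁ ω₂ ω₃ : Ghat,
      lam ω₂ ω₃ ^ ((π ω₁ : ℤˣ) : ℤ) * lam ω₁ (ω₂ * ω₃) = lam (ω₁ * ω₂) ω₃ * lam ω₁ ω₂)
    {V : Type*} [AddCommGroup V] [Module ℂ V] [FiniteDimensional ℂ V]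
    (φ : π.ker → (V ≃ₗ[ℂ] V))
    (hφ : ∀ g h : π.ker, (φ g).toLinearMap ∘ₗ (φ h).toLinearMap
      = ((lam (g : Ghat) (h : Ghat) : ℂˣ) : ℂ) • (φ (g * h)).toLinearMap)
    (ς : Ghat) (hς : π ς = -1) :
    ∀ g : π.ker,
      (((lam ς ς : ℂˣ) : ℂ) • (Module.Dual.eval ℂ V ∘ₗ (φ (sqk π ς)).toLinearMap)) ∘ₗ
          (φ g).toLinearMap
        = dualTw π lam ς (dualTw π lam ς (fun k => (φ k).toLinearMap)) g ∘ₗ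
            (((lam ς ς : ℂˣ) : ℂ) •
              (Module.Dual.eval ℂ V ∘ₗ (φ (sqk π ς)).toLinearMap)) := by
  intro g
  have hg : π (g : Ghat) = 1 := MonoidHom.mem_ker.mp g.2
  -- names
  set k : π.ker := kconj π ς g⁻¹ with hk
  set m : π.ker := kconj π ς k⁻¹ with hm
  have hkval : (k : Ghat) = ς * (g : Ghat)⁻¹ * ς⁻¹ := by
    simp [hk, kconj]
  have hmval : (m : Ghat) = ς * ς * (g : Ghat) * ς⁻¹ * ς⁻¹ := by
    simp [hm, hk, kconj]
    group
  have hmul : m * sqk π ς = sqk π ς * g := by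
    apply Subtype.ext
    push_cast [hmval, sqk]
    group
  -- dual naturality
  have hnat : ∀ (f : V →ₗ[ℂ] V),
      f.dualMap.dualMap ∘ₗ Module.Dual.eval ℂ V = Module.Dual.eval ℂ V ∘ₗ f :=
    fun f => by ext v ψ; rfl
  have hdsmul : ∀ (f : Module.Dual ℂ V →ₗ[ℂ] Module.Dual ℂ V) (c : ℂ),
      (c • f).dualMap = c • f.dualMap := fun f c => by ext ψ v; simp
  -- unfold RHS
  have hrhs : dualTw π lam ς (dualTw π lam ς (fun k => (φ k).toLinearMap)) g
      = ((((tau lam ς (g : Ghat))⁻¹ : ℂˣ) : ℂ) * (((tau lam ς (k : Ghat))⁻¹ : ℂˣ) : ℂ)) •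
        ((φ m).toLinearMap.dualMap.dualMap) := by
    rw [dualTw, dualTw, hdsmul, mul_smul]
  rw [hrhs]
  simp only [LinearMap.smul_comp, LinearMap.comp_smul, smul_smul]
  rw [LinearMap.comp_assoc, hφ (sqk π ς) g, ← LinearMap.comp_assoc, hnat,
    LinearMap.comp_assoc, hφ m, hmul]
  simp only [LinearMap.comp_smul, smul_smul]
  congr 1
  -- now a scalar identity in ℂ
  have key := scalar_id π lam hnorm hcoc ς (g : Ghat) hς hg
  have hkey : ((lam (ς * ς) (g:Ghat) * tau lam ς (g:Ghat) * tau lam ς (ς * (g:Ghat)⁻¹ * ς⁻¹) : ℂˣ) : ℂ)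
      = ((lam (ς * ς * (g:Ghat) * ς⁻¹ * ς⁻¹) (ς * ς) : ℂˣ) : ℂ) := by exact_mod_cast congrArg Units.val key
  push_cast at hkey
  rw [hkval, hmval, show ((sqk π ς : Ghat)) = ς * ς from rfl]
  simp only [Units.val_inv_eq_inv_val]
  set x : ℂ := ↑(tau lam ς (g : Ghat)) with hx
  set y : ℂ := ↑(tau lam ς (ς * (g : Ghat)⁻¹ * ς⁻¹)) with hy
  set B : ℂ := ↑(lam (ς * ς) (g : Ghat)) with hB
  set C : ℂ := ↑(lam (ς * ς * (g : Ghat) * ς⁻¹ * ς⁻¹) (ς * ς)) with hC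
  set b : ℂ := ↑(lam ς ς) with hb
  have nx : x ≠ 0 := Units.ne_zero _
  have ny : y ≠ 0 := Units.ne_zero _
  clear_value x y B C b
  field_simp
  linear_combination b * hkey
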